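/- arXiv:1803.01414 — 3 statements merged into one kernel-verified Lean document; each statement's English description precedes it below -/
import Mathlib

section
/- For every formal power series f over the integers with zero constant term and with the coefficient of q equal to 1, there exists a sequence of integers (g_n)_{n≥1} such that f = q·∏_{n=1}^∞ (1−q^n)^{g_n}, i.e., for every N ≥ 1 one has f ≡ q·∏_{n=1}^N (1−q^n)^{g_n} (mod q^{N+2}). -/
open PowerSeries Finset

private lemma key_pow (m : ℕ) (A b : PowerSeries ℤ)
    (hA : (X : PowerSeries ℤ) ^ (m+1) ∣ A * A)
    (hb : (X : PowerSeries ℤ) ^ (m+1) ∣ b - (1 - A)) :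
    ∀ n : ℕ, (X : PowerSeries ℤ) ^ (m+1) ∣ b ^ n - (1 - (n : PowerSeries ℤ) * A) := by
  intro n
  induction n with
  | zero => simp
  | succ n ih =>
    obtain ⟨r, hr⟩ := hA
    obtain ⟨s, hs⟩ := hb
    obtain ⟨t, ht⟩ := ih
    refine ⟨b * t + (1 - (n : PowerSeries ℤ) * A) * s + (n : PowerSeries ℤ) * r, ?_⟩
    push_cast
    linear_combination b * ht + (1 - (n : PowerSeries ℤ) * A) * hs + (n : PowerSeries ℤ) * hr

private lemma pow_sq_dvd (m : ℕ) (hm : 1 ≤ m) (A : PowerSeries ℤ) (hA : A = X ^ m ∨ A = -X^m) :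
    (X : PowerSeries ℤ) ^ (m+1) ∣ A * A := by
  have h : (X : PowerSeries ℤ) ^ (m+1) ∣ X ^ (m + m) := pow_dvd_pow X (by omega)
  rcases hA with h' | h' <;> subst h'
  · rw [← pow_add]; exact h
  · rw [neg_mul_neg, ← pow_add]; exact h

private lemma zpow_lem (m : ℕ) (hm : 1 ≤ m) (u : (PowerSeries ℤ)ˣ)
    (hu : (u : PowerSeries ℤ) = 1 - X ^ m) (g : ℤ) :
    (X : PowerSeries ℤ) ^ (m+1) ∣ (↑(u ^ g) : PowerSeries ℤ) - (1 - C g * X ^ m) := by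
  have hCg : (C g : PowerSeries ℤ) = (g : PowerSeries ℤ) := by
    rw [← map_intCast (C (R := ℤ)) g, Int.cast_id]
  rcases g with n | n
  · -- g = Int.ofNat n
    have h := key_pow m (X ^ m) (u : PowerSeries ℤ)
      (pow_sq_dvd m hm _ (Or.inl rfl)) (by rw [hu]; simp) n
    have hval : (↑(u ^ (Int.ofNat n)) : PowerSeries ℤ) = (u : PowerSeries ℤ) ^ n := by
      rw [Int.ofNat_eq_coe, zpow_natCast, Units.val_pow_eq_pow_val]
    rw [hval, hCg, show ((Int.ofNat n : ℤ) : PowerSeries ℤ) = ((n : ℕ) : PowerSeries ℤ) by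
      norm_cast]
    exact h
  · -- g = Int.negSucc n
    have hinv : (↑u⁻¹ : PowerSeries ℤ) * (1 - X ^ m) = 1 := by
      rw [← hu]; exact u.inv_mul
    have hXX : (X : PowerSeries ℤ) ^ (m+1) * X ^ (m-1) = X ^ m * X ^ m := by
      rw [← pow_add, ← pow_add]; congr 1; omega
    have hb : (X : PowerSeries ℤ) ^ (m+1) ∣ (↑u⁻¹ : PowerSeries ℤ) - (1 - (-X ^ m)) := by
      refine ⟨(↑u⁻¹ : PowerSeries ℤ) * X ^ (m-1), ?_⟩
      linear_combination (1 + (X : PowerSeries ℤ) ^ m) * hinv - (↑u⁻¹ : PowerSeries ℤ) * hXX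
    have h := key_pow m (-X ^ m) (↑u⁻¹ : PowerSeries ℤ)
      (pow_sq_dvd m hm _ (Or.inr rfl)) hb (n+1)
    have hval : (↑(u ^ (Int.negSucc n)) : PowerSeries ℤ) = (↑u⁻¹ : PowerSeries ℤ) ^ (n+1) := by
      rw [zpow_negSucc, ← inv_pow, Units.val_pow_eq_pow_val]
    rw [hval, hCg]
    convert h using 2
    rw [Int.negSucc_eq]
    push_cast
    ring

private lemma coeff_step (n : ℕ) (D : PowerSeries ℤ) (h : (X : PowerSeries ℤ) ^ n ∣ D) :
    (X : PowerSeries ℤ) ^ (n+1) ∣ D - C (coeff n D) * X ^ n := by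
  obtain ⟨E, hE⟩ := h
  have hc : coeff n D = constantCoeff E := by
    rw [hE]
    simpa using PowerSeries.coeff_X_pow_mul E n 0
  have hx : (X : PowerSeries ℤ) ∣ E - C (constantCoeff E) := by
    rw [PowerSeries.X_dvd_iff]; simp
  obtain ⟨w, hw⟩ := hx
  refine ⟨w, ?_⟩
  rw [hc, hE]
  linear_combination ((X : PowerSeries ℤ) ^ n) * hw

private noncomputable def gSeq (U : ℕ → (PowerSeries ℤ)ˣ) (f : PowerSeries ℤ) :
    ℕ → ℤ × (PowerSeries ℤ)ˣ
  | 0 => (0, 1)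
  | (N+1) =>
      (-(coeff (N+2) (f - X * ((gSeq U f N).2 : PowerSeries ℤ))),
        (gSeq U f N).2 * U (N+1) ^ (-(coeff (N+2) (f - X * ((gSeq U f N).2 : PowerSeries ℤ)))))

private lemma main_inv (U : ℕ → (PowerSeries ℤ)ˣ)
    (hU : ∀ n : ℕ, 0 < n → (U n : PowerSeries ℤ) = 1 - X ^ n)
    (f : PowerSeries ℤ)
    (h0 : PowerSeries.coeff 0 f = 0) (h1 : PowerSeries.coeff 1 f = 1) :
    ∀ N : ℕ, constantCoeff ((gSeq U f N).2 : PowerSeries ℤ) = 1 ∧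
      (X : PowerSeries ℤ) ^ (N+2) ∣ f - X * ((gSeq U f N).2 : PowerSeries ℤ) := by
  intro N
  induction N with
  | zero =>
    constructor
    · simp [gSeq]
    · rw [PowerSeries.X_pow_dvd_iff]
      intro m hm
      have h0' : constantCoeff f = 0 := by
        rw [← PowerSeries.coeff_zero_eq_constantCoeff]; exact h0
      interval_cases m <;> simp [gSeq, h0, h1, h0']
  | succ N ih =>
    obtain ⟨hP1, hD⟩ := ih
    set P : (PowerSeries ℤ)ˣ := (gSeq U f N).2 with hPdef
    set c : ℤ := coeff (N+2) (f - X * (P : PowerSeries ℤ)) with hcdef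
    have hz := zpow_lem (N+1) (by omega) (U (N+1)) (hU (N+1) (by omega)) (-c)
    have hgs1 : ((gSeq U f (N+1)).2 : PowerSeries ℤ)
        = (P : PowerSeries ℤ) * (↑(U (N+1) ^ (-c)) : PowerSeries ℤ) := by
      simp [gSeq, hPdef, hcdef, Units.val_mul]
    obtain ⟨s, hs⟩ := hz
    have hCneg : (C (-c) : PowerSeries ℤ) = - C c := map_neg _ _
    have hu_eq : (↑(U (N+1) ^ (-c)) : PowerSeries ℤ)
        = 1 + C c * X ^ (N+1) + X ^ (N+2) * s := by
      rw [hCneg] at hs; linear_combination hs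
    constructor
    · rw [hgs1, map_mul, hP1, one_mul, hu_eq]
      simp
    · have hB := coeff_step (N+2) (f - X * (P : PowerSeries ℤ)) hD
      rw [← hcdef] at hB
      obtain ⟨w1, hw1⟩ := hB
      have hxP : (X : PowerSeries ℤ) ∣ (P : PowerSeries ℤ) - 1 := by
        rw [PowerSeries.X_dvd_iff]; simp [hP1]
      obtain ⟨w2, hw2⟩ := hxP
      refine ⟨w1 - C c * w2 - s * (P : PowerSeries ℤ), ?_⟩
      rw [hgs1, hu_eq]
      linear_combination hw1 - (C c * X ^ (N+2)) * hw2

/-- **Existence of the product formula.**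
Every `f ∈ ℤ⟦q⟧` with zero constant term and coefficient of `q` equal to `1` can be written as
`f = q·∏_{n=1}^∞ (1−q^n)^{g_n}` for a sequence of integers `(g_n)_{n≥1}`, the infinite product
being understood `q`-adically: for every `N ≥ 1`,
`f ≡ q·∏_{n=1}^N (1−q^n)^{g_n} (mod q^{N+2})`.
Here `U n` is the power series `1 − q^n` (`n ≥ 1`) regarded as a unit of `ℤ⟦q⟧`, so that the
integer power `(1−q^n)^{g_n}` makes sense for `g_n ∈ ℤ`. -/
theorem product_formula_exists
    (U : ℕ → (PowerSeries ℤ)ˣ)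
    (hU : ∀ n : ℕ, 0 < n → (U n : PowerSeries ℤ) = 1 - X ^ n)
    (f : PowerSeries ℤ)
    (h0 : PowerSeries.coeff 0 f = 0) (h1 : PowerSeries.coeff 1 f = 1) :
    ∃ g : ℕ → ℤ, ∀ N : ℕ, 1 ≤ N →
      (X : PowerSeries ℤ) ^ (N + 2) ∣
        f - X * (↑(∏ n ∈ Finset.Icc 1 N, U n ^ g n) : PowerSeries ℤ) := by
  refine ⟨fun n => (gSeq U f n).1, ?_⟩
  have hprod : ∀ N : ℕ, (∏ n ∈ Finset.Icc 1 N, U n ^ (gSeq U f n).1) = (gSeq U f N).2 := by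
    intro N
    induction N with
    | zero => simp [gSeq]
    | succ N ih =>
      rw [Finset.prod_Icc_succ_top (by omega), ih]
      simp [gSeq]
  intro N _
  rw [hprod N]
  exact (main_inv U hU f h0 h1 N).2
end

section
/- The integer exponents in the product representation of a normalized power series are unique: if (g_n)_{n≥1} and (h_n)_{n≥1} are sequences of integers with q·∏_{n=1}^∞ (1−q^n)^{g_n} = q·∏_{n=1}^∞ (1−q^n)^{h_n} as formal power series over ℤ (both products understood q-adically), then g_n = h_n for all n ≥ 1. -/
open PowerSeries Finset


lemma coeff_one_sub_X_pow_pow (n k : ℕ) (hn : 1 ≤ n) :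
    (PowerSeries.coeff (R := ℤ) n) ((1 - X ^ n) ^ k) = -(k : ℤ) := by
  induction k with
  | zero =>
    simp [PowerSeries.coeff_one, Nat.one_le_iff_ne_zero.mp hn]
  | succ k ih =>
    have h1 : ((1 - X ^ n) ^ (k+1) : PowerSeries ℤ)
        = (1 - X^n)^k - (1 - X^n)^k * X^n := by ring
    rw [h1, map_sub, ih]
    have h2 : (PowerSeries.coeff (R := ℤ) n) ((1 - X^n)^k * X^n)
        = (PowerSeries.coeff (R := ℤ) 0) ((1 - X^n)^k) := by
      have := PowerSeries.coeff_mul_X_pow ((1 - X^n : PowerSeries ℤ)^k) n 0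
      simpa using this
    rw [h2]
    have h3 : (PowerSeries.coeff (R := ℤ) 0) ((1 - X^n : PowerSeries ℤ)^k) = 1 := by
      rw [PowerSeries.coeff_zero_eq_constantCoeff, map_pow, map_sub, map_one,
        map_pow, PowerSeries.constantCoeff_X]
      simp [zero_pow (Nat.one_le_iff_ne_zero.mp hn)]
    rw [h3]; push_cast; ring

lemma nat_exp_zero (n k : ℕ) (hn : 1 ≤ n)
    (hd : (X : PowerSeries ℤ) ^ (n+1) ∣ (1 - X ^ n) ^ k - 1) : k = 0 := by
  have := (PowerSeries.X_pow_dvd_iff.mp hd) n (Nat.lt_succ_self n)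
  rw [map_sub, coeff_one_sub_X_pow_pow n k hn, PowerSeries.coeff_one] at this
  simp [Nat.one_le_iff_ne_zero.mp hn] at this
  exact_mod_cast this

lemma zpow_exp_zero (n : ℕ) (hn : 1 ≤ n) (u : (PowerSeries ℤ)ˣ)
    (hu : (u : PowerSeries ℤ) = 1 - X ^ n) (c : ℤ)
    (hd : (X : PowerSeries ℤ) ^ (n+1) ∣ ((u ^ c : (PowerSeries ℤ)ˣ) : PowerSeries ℤ) - 1) :
    c = 0 := by
  rcases le_or_gt 0 c with hc | hc
  · have hc' : ((c.toNat : ℤ)) = c := Int.toNat_of_nonneg hc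
    have : ((u ^ c : (PowerSeries ℤ)ˣ) : PowerSeries ℤ) = (1 - X ^ n) ^ c.toNat := by
      rw [← hc', zpow_natCast, Units.val_pow_eq_pow_val, hu, Int.toNat_natCast]
    rw [this] at hd
    have := nat_exp_zero n c.toNat hn hd
    omega
  · exfalso
    have key : ((u ^ (-c) : (PowerSeries ℤ)ˣ) : PowerSeries ℤ) - 1
        = -(((u ^ (-c) : (PowerSeries ℤ)ˣ) : PowerSeries ℤ) *
            (((u ^ c : (PowerSeries ℤ)ˣ) : PowerSeries ℤ) - 1)) := by
      have : ((u ^ (-c) : (PowerSeries ℤ)ˣ) : PowerSeries ℤ) *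
          ((u ^ c : (PowerSeries ℤ)ˣ) : PowerSeries ℤ) = 1 := by
        rw [← Units.val_mul, ← zpow_add, neg_add_cancel, zpow_zero, Units.val_one]
      rw [mul_sub, this]; ring
    have hd2 : (X : PowerSeries ℤ) ^ (n+1) ∣
        ((u ^ (-c) : (PowerSeries ℤ)ˣ) : PowerSeries ℤ) - 1 := by
      rw [key]
      exact (hd.mul_left _).neg_right
    have hnc : (((-c).toNat : ℤ)) = -c := Int.toNat_of_nonneg (by omega)
    have : ((u ^ (-c) : (PowerSeries ℤ)ˣ) : PowerSeries ℤ) = (1 - X ^ n) ^ (-c).toNat := by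
      rw [← hnc, zpow_natCast, Units.val_pow_eq_pow_val, hu, Int.toNat_natCast]
    rw [this] at hd2
    have := nat_exp_zero n (-c).toNat hn hd2
    omega

/-- **Uniqueness of the exponents in the product formula.**
If two sequences of integers `(g_n)_{n≥1}` and `(h_n)_{n≥1}` satisfy
`q·∏_{n=1}^∞ (1−q^n)^{g_n} = q·∏_{n=1}^∞ (1−q^n)^{h_n}` in `ℤ⟦q⟧` — i.e. there is a single
power series `F` which is `q`-adically the value of both infinite products, meaning
`F ≡ q·∏_{n=1}^N (1−q^n)^{g_n} (mod q^{N+2})` and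
`F ≡ q·∏_{n=1}^N (1−q^n)^{h_n} (mod q^{N+2})` for every `N ≥ 1` — then `g_n = h_n` for all
`n ≥ 1`. Here `U n` is `1 − q^n` (`n ≥ 1`) regarded as a unit of `ℤ⟦q⟧`. -/
theorem product_formula_exponents_unique
    (U : ℕ → (PowerSeries ℤ)ˣ)
    (hU : ∀ n : ℕ, 0 < n → (U n : PowerSeries ℤ) = 1 - X ^ n)
    (g h : ℕ → ℤ) (F : PowerSeries ℤ)
    (hg : ∀ N : ℕ, 1 ≤ N →
      (X : PowerSeries ℤ) ^ (N + 2) ∣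
        F - X * (↑(∏ n ∈ Finset.Icc 1 N, U n ^ g n) : PowerSeries ℤ))
    (hh : ∀ N : ℕ, 1 ≤ N →
      (X : PowerSeries ℤ) ^ (N + 2) ∣
        F - X * (↑(∏ n ∈ Finset.Icc 1 N, U n ^ h n) : PowerSeries ℤ)) :
    ∀ n : ℕ, 1 ≤ n → g n = h n := by
  intro n
  induction n using Nat.strong_induction_on with
  | _ n IH =>
    intro hn
    obtain ⟨k, rfl⟩ : ∃ k, n = k + 1 := ⟨n - 1, (Nat.succ_pred_eq_of_pos hn).symm⟩
    -- the prefix products agree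
    have hpre : (∏ m ∈ Finset.Icc 1 k, U m ^ g m) = ∏ m ∈ Finset.Icc 1 k, U m ^ h m := by
      refine Finset.prod_congr rfl fun m hm => ?_
      obtain ⟨hm1, hm2⟩ := Finset.mem_Icc.mp hm
      rw [IH m (by omega) hm1]
    have hsplitg : (∏ m ∈ Finset.Icc 1 (k+1), U m ^ g m)
        = (∏ m ∈ Finset.Icc 1 k, U m ^ g m) * U (k+1) ^ g (k+1) :=
      Finset.prod_Icc_succ_top (by omega) _
    have hsplith : (∏ m ∈ Finset.Icc 1 (k+1), U m ^ h m)
        = (∏ m ∈ Finset.Icc 1 k, U m ^ h m) * U (k+1) ^ h (k+1) :=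
      Finset.prod_Icc_succ_top (by omega) _
    set P : (PowerSeries ℤ)ˣ := ∏ m ∈ Finset.Icc 1 k, U m ^ g m with hP
    have hd1 : (X : PowerSeries ℤ) ^ (k + 1 + 2) ∣
        X * ((↑(∏ m ∈ Finset.Icc 1 (k+1), U m ^ h m) : PowerSeries ℤ)
          - (↑(∏ m ∈ Finset.Icc 1 (k+1), U m ^ g m) : PowerSeries ℤ)) := by
      have := dvd_sub (hg (k+1) (by omega)) (hh (k+1) (by omega))
      convert this using 1
      ring
    have hd2 : (X : PowerSeries ℤ) ^ (k + 2) ∣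
        ((↑(∏ m ∈ Finset.Icc 1 (k+1), U m ^ h m) : PowerSeries ℤ)
          - (↑(∏ m ∈ Finset.Icc 1 (k+1), U m ^ g m) : PowerSeries ℤ)) := by
      have hX : (X : PowerSeries ℤ) ≠ 0 := PowerSeries.X_ne_zero
      rw [show k + 1 + 2 = 1 + (k + 2) by omega, pow_add, pow_one] at hd1
      exact (mul_dvd_mul_iff_left hX).mp hd1
    rw [hsplitg, hsplith, ← hpre, Units.val_mul, Units.val_mul, ← mul_sub] at hd2
    -- cancel the unit P
    have hd3 : (X : PowerSeries ℤ) ^ (k + 2) ∣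
        ((↑(U (k+1) ^ h (k+1)) : PowerSeries ℤ) - ↑(U (k+1) ^ g (k+1))) := by
      have := hd2.mul_left ((↑P⁻¹ : PowerSeries ℤ))
      rwa [← mul_assoc, ← Units.val_mul, inv_mul_cancel, Units.val_one, one_mul] at this
    -- cancel U^(g (k+1))
    have hd4 : (X : PowerSeries ℤ) ^ (k + 2) ∣
        ((↑(U (k+1) ^ (h (k+1) - g (k+1))) : PowerSeries ℤ) - 1) := by
      have := hd3.mul_left ((↑((U (k+1)) ^ (-(g (k+1)))) : PowerSeries ℤ))
      rwa [mul_sub, ← Units.val_mul, ← Units.val_mul, ← zpow_add, ← zpow_add,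
        neg_add_cancel, zpow_zero, Units.val_one, show -g (k+1) + h (k+1) = h (k+1) - g (k+1) by ring]
        at this
    have := zpow_exp_zero (k+1) (by omega) (U (k+1)) (hU (k+1) (by omega))
      (h (k+1) - g (k+1)) (by rw [show k + 1 + 1 = k + 2 from rfl]; exact hd4)
    omega
end

section
/- Logarithmic derivative of the product formula: let (g_n)_{n≥1} be a sequence of integers and let f ∈ ℤ⟦q⟧ satisfy f = q·∏_{n=1}^∞ (1−q^n)^{g_n} (q-adically). Then q·f′ = f·(1 − ∑_{m=1}^∞ (∑_{d ∣ m} d·g_d) q^m), where f′ denotes the formal derivative of f and the inner sum runs over the positive divisors d of m. -/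
open PowerSeries Finset

noncomputable def Ld (u : (PowerSeries ℤ)ˣ) : PowerSeries ℤ :=
  (↑u⁻¹ : PowerSeries ℤ) * d⁄dX ℤ (↑u : PowerSeries ℤ)

lemma Ld_one : Ld 1 = 0 := by simp [Ld]

lemma Ld_mul (u v : (PowerSeries ℤ)ˣ) : Ld (u * v) = Ld u + Ld v := by
  have hu : (↑u⁻¹ : PowerSeries ℤ) * ↑u = 1 := u.inv_mul
  have hv : (↑v⁻¹ : PowerSeries ℤ) * ↑v = 1 := v.inv_mul
  simp only [Ld, mul_inv_rev, Units.val_mul, Derivation.leibniz, smul_eq_mul]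
  linear_combination ((↑u⁻¹ : PowerSeries ℤ) * d⁄dX ℤ ↑u) * hv +
    ((↑v⁻¹ : PowerSeries ℤ) * d⁄dX ℤ ↑v) * hu

lemma Ld_pow (u : (PowerSeries ℤ)ˣ) (n : ℕ) : Ld (u ^ n) = n • Ld u := by
  induction n with
  | zero => simp [Ld_one]
  | succ n ih => rw [pow_succ, Ld_mul, ih, add_smul, one_smul]

lemma Ld_inv (u : (PowerSeries ℤ)ˣ) : Ld u⁻¹ = - Ld u := by
  have h := Ld_mul u u⁻¹
  rw [mul_inv_cancel, Ld_one] at h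
  exact eq_neg_of_add_eq_zero_right h.symm

lemma Ld_zpow (u : (PowerSeries ℤ)ˣ) (z : ℤ) : Ld (u ^ z) = z • Ld u := by
  cases z with
  | ofNat n => rw [Int.ofNat_eq_coe, zpow_natCast, Ld_pow, natCast_zsmul]
  | negSucc n => rw [zpow_negSucc, Ld_inv, Ld_pow, negSucc_zsmul]

lemma deriv_unit (u : (PowerSeries ℤ)ˣ) :
    d⁄dX ℤ (↑u : PowerSeries ℤ) = ↑u * Ld u := by
  have hu : (↑u : PowerSeries ℤ) * ↑u⁻¹ = 1 := u.mul_inv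
  rw [Ld, ← mul_assoc, hu, one_mul]

lemma Ld_prod (s : Finset ℕ) (u : ℕ → (PowerSeries ℤ)ˣ) :
    Ld (∏ n ∈ s, u n) = ∑ n ∈ s, Ld (u n) := by
  classical
  induction s using Finset.induction with
  | empty => simp [Ld_one]
  | @insert a s h ih => rw [Finset.prod_insert h, Ld_mul, ih, Finset.sum_insert h]

/-- the series `∑_{k≥1} n X^{nk}` -/
noncomputable def Tser (n : ℕ) : PowerSeries ℤ :=
  PowerSeries.mk fun m => if n ∣ m ∧ m ≠ 0 then (n : ℤ) else 0

lemma one_sub_X_pow_mul_Tser (n : ℕ) (hn : 0 < n) :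
    (1 - X ^ n) * Tser n = (n : ℤ) • (X : PowerSeries ℤ) ^ n := by
  ext m
  rw [sub_mul, one_mul, map_sub, map_smul, coeff_X_pow_mul' (Tser n) n m]
  simp only [Tser, coeff_mk, coeff_X_pow, smul_eq_mul]
  by_cases hm : m = n
  · subst hm
    simp [Tser, hn.ne', Nat.sub_self]
  · rw [if_neg hm, mul_zero]
    by_cases hle : n ≤ m
    · rw [if_pos hle]
      have hm0 : m ≠ 0 := by omega
      have hdvd : n ∣ m - n ↔ n ∣ m := by
        constructor
        · intro h; have := Nat.dvd_add h (dvd_refl n); rwa [Nat.sub_add_cancel hle] at this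
        · intro h; exact Nat.dvd_sub h (dvd_refl n)
      by_cases hd : n ∣ m
      · rw [if_pos ⟨hd, hm0⟩, if_pos ⟨hdvd.mpr hd, by omega⟩, sub_self]
      · rw [if_neg (by tauto), if_neg (by rw [hdvd]; tauto), sub_zero]
    · rw [if_neg hle, if_neg, sub_zero]
      rintro ⟨hd, hm0⟩
      exact hle (Nat.le_of_dvd (Nat.pos_of_ne_zero hm0) hd)

lemma X_mul_Ld (U : ℕ → (PowerSeries ℤ)ˣ)
    (hU : ∀ n : ℕ, 0 < n → (U n : PowerSeries ℤ) = 1 - X ^ n)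
    (n : ℕ) (hn : 0 < n) : (X : PowerSeries ℤ) * Ld (U n) = - Tser n := by
  have hinv : (↑(U n)⁻¹ : PowerSeries ℤ) * (1 - X ^ n) = 1 := by
    rw [← hU n hn]; exact (U n).inv_mul
  have hXn : (X : PowerSeries ℤ) * X ^ (n - 1) = X ^ n := by
    rw [← pow_succ']; congr 1; omega
  have hD : (X : PowerSeries ℤ) * d⁄dX ℤ ((U n : PowerSeries ℤ)) =
      -((1 - X ^ n) * Tser n) := by
    rw [one_sub_X_pow_mul_Tser n hn, hU n hn, map_sub, Derivation.leibniz_pow, derivative_X]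
    simp only [Derivation.map_one_eq_zero, smul_eq_mul, mul_one, nsmul_eq_mul, zsmul_eq_mul]
    push_cast
    rw [mul_sub, ← hXn]
    ring
  rw [Ld, ← mul_assoc, mul_comm (X : PowerSeries ℤ), mul_assoc, hD, mul_neg,
    ← mul_assoc, hinv, one_mul]

lemma div_key (U : ℕ → (PowerSeries ℤ)ˣ)
    (hU : ∀ n : ℕ, 0 < n → (U n : PowerSeries ℤ) = 1 - X ^ n)
    (g : ℕ → ℤ) (N : ℕ) (hN : 1 ≤ N) :
    (X : PowerSeries ℤ) ^ (N + 1) ∣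
      (PowerSeries.mk fun m : ℕ => ∑ d ∈ m.divisors, (d : ℤ) * g d) -
        ∑ n ∈ Finset.Icc 1 N, g n • Tser n := by
  rw [PowerSeries.X_pow_dvd_iff]
  intro k hk
  rw [map_sub, coeff_mk, map_sum, sub_eq_zero]
  have hfil : k.divisors = (Finset.Icc 1 N).filter (fun n => n ∣ k ∧ k ≠ 0) := by
    ext d
    simp only [Nat.mem_divisors, Finset.mem_filter, Finset.mem_Icc]
    constructor
    · rintro ⟨hd, hk0⟩
      have h1 : 1 ≤ d := Nat.pos_of_dvd_of_pos hd (Nat.pos_of_ne_zero hk0)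
      have h2 : d ≤ k := Nat.le_of_dvd (Nat.pos_of_ne_zero hk0) hd
      exact ⟨⟨h1, by omega⟩, hd, hk0⟩
    · rintro ⟨-, h⟩; exact h
  rw [hfil, Finset.sum_filter]
  refine Finset.sum_congr rfl fun n _ => ?_
  rw [map_zsmul]
  simp only [Tser, PowerSeries.coeff_mk, smul_eq_mul]
  split_ifs <;> ring

lemma dvd_derivative {k : ℕ} {h : PowerSeries ℤ}
    (hd : (X : PowerSeries ℤ) ^ (k + 1) ∣ h) : (X : PowerSeries ℤ) ^ k ∣ d⁄dX ℤ h := by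
  obtain ⟨c, rfl⟩ := hd
  rw [Derivation.leibniz, Derivation.leibniz_pow, derivative_X]
  simp only [smul_eq_mul, mul_one, nsmul_eq_mul, Nat.add_sub_cancel]
  refine dvd_add ?_ ?_
  · exact dvd_mul_of_dvd_left (pow_dvd_pow X k.le_succ) _
  · exact Dvd.dvd.mul_left (dvd_mul_left _ _) c

set_option maxHeartbeats 1000000 in
/-- **Logarithmic derivative of the product formula.**
Let `(g_n)_{n≥1}` be integers and let `f ∈ ℤ⟦q⟧` satisfy `f = q·∏_{n=1}^∞ (1−q^n)^{g_n}`
`q`-adically, i.e. `f ≡ q·∏_{n=1}^N (1−q^n)^{g_n} (mod q^{N+2})` for every `N ≥ 1`.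
Then `q·f′ = f·(1 − ∑_{m=1}^∞ (∑_{d ∣ m} d·g_d) q^m)`, where `f′` is the formal derivative
and the inner sum runs over the positive divisors `d` of `m`. This is the formal-power-series
form of `q(∂f/∂q)/f = 1 − ∑_{n≥1} g_n·n·q^n/(1−q^n)`. Here `U n` is `1 − q^n` (`n ≥ 1`)
regarded as a unit of `ℤ⟦q⟧`. -/
theorem log_derivative_of_product_formula
    (U : ℕ → (PowerSeries ℤ)ˣ)
    (hU : ∀ n : ℕ, 0 < n → (U n : PowerSeries ℤ) = 1 - X ^ n)
    (g : ℕ → ℤ) (f : PowerSeries ℤ)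
    (hf : ∀ N : ℕ, 1 ≤ N →
      (X : PowerSeries ℤ) ^ (N + 2) ∣
        f - X * (↑(∏ n ∈ Finset.Icc 1 N, U n ^ g n) : PowerSeries ℤ)) :
    X * d⁄dX ℤ f =
      f * (1 - PowerSeries.mk fun m : ℕ => ∑ d ∈ m.divisors, (d : ℤ) * g d) := by
  set S : PowerSeries ℤ := PowerSeries.mk fun m : ℕ => ∑ d ∈ m.divisors, (d : ℤ) * g d with hS
  rw [← sub_eq_zero]
  ext m
  rw [map_zero]
  set N := max m 1 with hNdef
  have hN1 : 1 ≤ N := le_max_right _ _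
  have hmN : m < N + 1 := by
    have := le_max_left m 1; omega
  set P : (PowerSeries ℤ)ˣ := ∏ n ∈ Finset.Icc 1 N, U n ^ g n with hP
  have h1 : (X : PowerSeries ℤ) ^ (N + 2) ∣ f - X * (↑P : PowerSeries ℤ) := by
    rw [hP]; exact hf N hN1
  have key : (X : PowerSeries ℤ) ^ (N + 1) ∣ X * d⁄dX ℤ f - f * (1 - S) := by
    have hD : (X : PowerSeries ℤ) ^ (N + 1) ∣ d⁄dX ℤ f - d⁄dX ℤ (X * (P : PowerSeries ℤ)) := by
      rw [← map_sub]
      exact dvd_derivative h1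
    have h2 : d⁄dX ℤ ((X : PowerSeries ℤ) * (P : PowerSeries ℤ)) = (P : PowerSeries ℤ) + X * ((P : PowerSeries ℤ) * Ld P) := by
      rw [Derivation.leibniz, derivative_X, deriv_unit]
      simp only [smul_eq_mul, mul_one]
      ring
    have h4 : (X : PowerSeries ℤ) * Ld P = -∑ n ∈ Finset.Icc 1 N, g n • Tser n := by
      rw [hP, Ld_prod, Finset.mul_sum, ← Finset.sum_neg_distrib]
      refine Finset.sum_congr rfl fun n hn => ?_
      have hn1 : 0 < n := by
        rw [Finset.mem_Icc] at hn; omega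
      rw [Ld_zpow, mul_smul_comm, X_mul_Ld U hU n hn1, smul_neg]
    have decomp : X * d⁄dX ℤ f - f * (1 - S) =
        X * (d⁄dX ℤ f - d⁄dX ℤ (X * (P : PowerSeries ℤ))) +
          X * (P : PowerSeries ℤ) * (S - ∑ n ∈ Finset.Icc 1 N, g n • Tser n) -
          (f - X * (P : PowerSeries ℤ)) * (1 - S) := by
      have e : X * (d⁄dX ℤ (X * (P : PowerSeries ℤ))) = X * (P : PowerSeries ℤ) + X * (X * ((P : PowerSeries ℤ) * Ld P)) := by
        rw [h2]; ring
      have e2 : (X : PowerSeries ℤ) * (X * ((P : PowerSeries ℤ) * Ld P)) =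
          X * (P : PowerSeries ℤ) * (-∑ n ∈ Finset.Icc 1 N, g n • Tser n) := by
        rw [← h4]; ring
      rw [show X * d⁄dX ℤ f = X * (d⁄dX ℤ f - d⁄dX ℤ (X * (P : PowerSeries ℤ))) + X * (d⁄dX ℤ (X * (P : PowerSeries ℤ)))
        by ring, e, e2]
      ring
    rw [decomp]
    refine dvd_sub (dvd_add ?_ ?_) ?_
    · exact Dvd.dvd.mul_left hD X
    · exact Dvd.dvd.mul_left (div_key U hU g N hN1) _
    · exact Dvd.dvd.mul_right (dvd_trans (pow_dvd_pow X (by omega)) h1) _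
  exact (PowerSeries.X_pow_dvd_iff.mp key) m hmN
end
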